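/- Let h : [0,T] → ℝ be differentiable with h(T) = 0, satisfying h'(t) + c(t) h(t) = G(t) where c is continuous with |∫_s^t c| ≤ K for all s,t ∈ [0,T] and G is continuous. Then ∫_0^T |h(s)|² ds ≤ e^{2K} T² ∫_0^T |G(t)|² dt. -/

import Mathlib

open intervalIntegral

private lemma cs_aux (T : ℝ) (hT : 0 < T) (f : ℝ → ℝ)
    (hf : IntervalIntegrable f MeasureTheory.volume 0 T)
    (hf2 : IntervalIntegrable (fun t => f t ^ 2) MeasureTheory.volume 0 T) :
    (∫ t in (0:ℝ)..T, f t) ^ 2 ≤ T * ∫ t in (0:ℝ)..T, f t ^ 2 := by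
  set I := ∫ t in (0:ℝ)..T, f t with hI
  set A := I / T with hA
  have h0 : 0 ≤ ∫ t in (0:ℝ)..T, (f t - A) ^ 2 :=
    intervalIntegral.integral_nonneg hT.le fun u _ => sq_nonneg _
  have hexp : ∫ t in (0:ℝ)..T, (f t - A) ^ 2
      = (∫ t in (0:ℝ)..T, f t ^ 2) - 2 * A * I + A ^ 2 * T := by
    have hptw : ∀ t, (f t - A) ^ 2 = f t ^ 2 - (2 * A) * f t + A ^ 2 := fun t => by ring
    simp_rw [hptw]
    rw [intervalIntegral.integral_add (hf2.sub (hf.const_mul (2 * A)))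
        intervalIntegrable_const,
      intervalIntegral.integral_sub hf2 (hf.const_mul (2 * A)),
      intervalIntegral.integral_const_mul, intervalIntegral.integral_const]
    simp only [smul_eq_mul, sub_zero, ← hI]
    ring
  have hAT : A * T = I := div_mul_cancel₀ _ hT.ne'
  rw [hexp] at h0
  nlinarith [h0, hAT, hT, sq_nonneg A]

/-- One-dimensional `L²` stability estimate for the transport equation
`h' + c h = G` with `h(T) = 0` and integrating-factor ratio bounded by `e^K`:
`∫_0^T |h|² ≤ e^{2K} T² ∫_0^T |G|²`. -/
theorem transport_L2_estimate (T K : ℝ) (hT : 0 ≤ T) (c G h : ℝ → ℝ)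
    (hc : ContinuousOn c (Set.Icc 0 T)) (hG : ContinuousOn G (Set.Icc 0 T))
    (hK : ∀ s ∈ Set.Icc 0 T, ∀ t ∈ Set.Icc 0 T, |∫ r in s..t, c r| ≤ K)
    (hode : ∀ t ∈ Set.Icc 0 T, HasDerivAt h (G t - c t * h t) t)
    (hterm : h T = 0) :
    (∫ s in (0:ℝ)..T, |h s| ^ 2) ≤ Real.exp (2 * K) * T ^ 2 * ∫ t in (0:ℝ)..T, |G t| ^ 2 := by
  rcases hT.eq_or_lt with hT0 | hT0
  · simp [← hT0]
  have hTmem : T ∈ Set.Icc (0:ℝ) T := ⟨hT, le_rfl⟩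
  have h0mem : (0:ℝ) ∈ Set.Icc (0:ℝ) T := ⟨le_rfl, hT⟩
  set C : ℝ → ℝ := fun t => ∫ r in (0:ℝ)..t, c r with hCdef
  have hsub : ∀ a ∈ Set.Icc (0:ℝ) T, ∀ b ∈ Set.Icc (0:ℝ) T, Set.uIcc a b ⊆ Set.Icc 0 T := by
    intro a ha b hb
    rw [← Set.uIcc_of_le hT]
    exact Set.uIcc_subset_uIcc (by rwa [Set.uIcc_of_le hT]) (by rwa [Set.uIcc_of_le hT])
  have hcint : ∀ a ∈ Set.Icc (0:ℝ) T, ∀ b ∈ Set.Icc (0:ℝ) T,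
      IntervalIntegrable c MeasureTheory.volume a b :=
    fun a ha b hb => (hc.mono (hsub a ha b hb)).intervalIntegrable
  have hCcont : ContinuousOn C (Set.Icc 0 T) := by
    rw [← Set.uIcc_of_le hT]
    exact intervalIntegral.continuousOn_primitive_interval
      (by rw [Set.uIcc_of_le hT]; exact hc.integrableOn_Icc)
  have hEcont : ContinuousOn (fun t => Real.exp (C t)) (Set.Icc 0 T) :=
    Real.continuous_exp.comp_continuousOn hCcont
  have hhcont : ContinuousOn h (Set.Icc 0 T) :=
    fun x hx => (hode x hx).continuousAt.continuousWithinAt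
  -- integrability facts
  have hGint : ∀ a ∈ Set.Icc (0:ℝ) T, ∀ b ∈ Set.Icc (0:ℝ) T,
      IntervalIntegrable (fun t => |G t|) MeasureTheory.volume a b :=
    fun a ha b hb => ((hG.mono (hsub a ha b hb)).abs).intervalIntegrable
  have hG2int : IntervalIntegrable (fun t => |G t| ^ 2) MeasureTheory.volume 0 T := by
    apply ContinuousOn.intervalIntegrable
    rw [Set.uIcc_of_le hT]
    exact (hG.abs).pow 2
  -- key integral representation
  have key : ∀ s ∈ Set.Icc (0:ℝ) T,
      h s * Real.exp (C s) = -∫ t in s..T, Real.exp (C t) * G t := by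
    intro s hs
    have hIccsub : Set.Icc s T ⊆ Set.Icc (0:ℝ) T := Set.Icc_subset_Icc hs.1 le_rfl
    have hint : IntervalIntegrable (fun t => Real.exp (C t) * G t) MeasureTheory.volume s T := by
      apply ContinuousOn.intervalIntegrable
      exact ((hEcont.mono (hsub s hs T hTmem)).mul (hG.mono (hsub s hs T hTmem)))
    have heq := intervalIntegral.integral_eq_sub_of_hasDeriv_right_of_le hs.2
      (f := fun t => h t * Real.exp (C t)) (f' := fun t => Real.exp (C t) * G t)
      ((hhcont.mono hIccsub).mul (hEcont.mono hIccsub))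
      (fun x hx => by
        have hx' : x ∈ Set.Ioo (0:ℝ) T := ⟨lt_of_le_of_lt hs.1 hx.1, hx.2⟩
        have hxI : x ∈ Set.Icc (0:ℝ) T := Set.Ioo_subset_Icc_self hx'
        have hcx : ContinuousAt c x := hc.continuousAt (Icc_mem_nhds hx'.1 hx'.2)
        have hmeas : StronglyMeasurableAtFilter c (nhds x) MeasureTheory.volume :=
          ContinuousAt.stronglyMeasurableAtFilter isOpen_Ioo
            (fun y hy => hc.continuousAt (Icc_mem_nhds hy.1 hy.2)) x hx'
        have hCd : HasDerivAt C (c x) x :=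
          intervalIntegral.integral_hasDerivAt_right (hcint 0 h0mem x hxI) hmeas hcx
        have hhd := hode x hxI
        have hd := hhd.mul hCd.exp
        have hrw : (G x - c x * h x) * Real.exp (C x) + h x * (Real.exp (C x) * c x)
            = Real.exp (C x) * G x := by ring
        rw [hrw] at hd
        exact hd.hasDerivWithinAt)
      hint
    rw [hterm, zero_mul, zero_sub] at heq
    linarith [heq]
  -- pointwise bound on |h|
  set J := ∫ t in (0:ℝ)..T, |G t| with hJ
  have hJ0 : 0 ≤ J := intervalIntegral.integral_nonneg hT fun u _ => abs_nonneg _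
  have hbound : ∀ s ∈ Set.Icc (0:ℝ) T, |h s| ≤ Real.exp K * J := by
    intro s hs
    have hE := Real.exp_pos (C s)
    have h1 : |h s| * Real.exp (C s) = |∫ t in s..T, Real.exp (C t) * G t| := by
      rw [← abs_of_pos hE, ← abs_mul, key s hs, abs_neg]
    have h2 : |∫ t in s..T, Real.exp (C t) * G t|
        ≤ ∫ t in s..T, Real.exp (C t) * |G t| := by
      refine le_trans (intervalIntegral.abs_integral_le_integral_abs hs.2) (le_of_eq ?_)
      apply intervalIntegral.integral_congr
      intro t _
      show |Real.exp (C t) * G t| = Real.exp (C t) * |G t|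
      rw [abs_mul, abs_of_pos (Real.exp_pos _)]
    have hint1 : IntervalIntegrable (fun t => Real.exp (C t) * |G t|)
        MeasureTheory.volume s T := by
      apply ContinuousOn.intervalIntegrable
      exact ((hEcont.mono (hsub s hs T hTmem)).mul ((hG.mono (hsub s hs T hTmem)).abs))
    have h3 : ∫ t in s..T, Real.exp (C t) * |G t|
        ≤ ∫ t in s..T, (Real.exp K * Real.exp (C s)) * |G t| := by
      apply intervalIntegral.integral_mono_on hs.2 hint1
        ((hGint s hs T hTmem).const_mul _)
      intro t ht
      have htI : t ∈ Set.Icc (0:ℝ) T := ⟨hs.1.trans ht.1, ht.2⟩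
      have hdiff : C t - C s = ∫ r in s..t, c r :=
        intervalIntegral.integral_interval_sub_left (hcint 0 h0mem t htI)
          (hcint 0 h0mem s hs)
      have hleK : C t - C s ≤ K := by
        rw [hdiff]; exact (le_abs_self _).trans (hK s hs t htI)
      have : Real.exp (C t) ≤ Real.exp K * Real.exp (C s) := by
        rw [← Real.exp_add]; exact Real.exp_le_exp.2 (by linarith)
      exact mul_le_mul_of_nonneg_right this (abs_nonneg _)
    have h4 : ∫ t in s..T, (Real.exp K * Real.exp (C s)) * |G t|
        = (Real.exp K * Real.exp (C s)) * ∫ t in s..T, |G t| :=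
      intervalIntegral.integral_const_mul _ _
    have h5 : ∫ t in s..T, |G t| ≤ J := by
      rw [hJ, ← intervalIntegral.integral_add_adjacent_intervals
        (hGint 0 h0mem s hs) (hGint s hs T hTmem)]
      have : 0 ≤ ∫ t in (0:ℝ)..s, |G t| :=
        intervalIntegral.integral_nonneg hs.1 fun u _ => abs_nonneg _
      linarith
    have hfinal : |h s| * Real.exp (C s) ≤ (Real.exp K * J) * Real.exp (C s) := by
      rw [h1]
      calc |∫ t in s..T, Real.exp (C t) * G t|
          ≤ (Real.exp K * Real.exp (C s)) * ∫ t in s..T, |G t| := by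
            rw [← h4]; exact h2.trans h3
        _ ≤ (Real.exp K * Real.exp (C s)) * J := by
            exact mul_le_mul_of_nonneg_left h5
              (mul_nonneg (Real.exp_pos K).le hE.le)
        _ = (Real.exp K * J) * Real.exp (C s) := by ring
    exact le_of_mul_le_mul_right hfinal hE
  -- assemble
  have hh2int : IntervalIntegrable (fun s => |h s| ^ 2) MeasureTheory.volume 0 T := by
    apply ContinuousOn.intervalIntegrable
    rw [Set.uIcc_of_le hT]
    exact (hhcont.abs).pow 2
  have step1 : (∫ s in (0:ℝ)..T, |h s| ^ 2)
      ≤ ∫ s in (0:ℝ)..T, (Real.exp K * J) ^ 2 := by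
    apply intervalIntegral.integral_mono_on hT hh2int intervalIntegrable_const
    intro s hs
    exact pow_le_pow_left₀ (abs_nonneg _) (hbound s hs) 2
  have step2 : (∫ s in (0:ℝ)..T, (Real.exp K * J) ^ 2 : ℝ) = T * (Real.exp K * J) ^ 2 := by
    rw [intervalIntegral.integral_const]; simp
  have hcs := cs_aux T hT0 (fun t => |G t|) (hGint 0 h0mem T hTmem) hG2int
  have hexp2 : Real.exp K * Real.exp K = Real.exp (2 * K) := by
    rw [← Real.exp_add]; ring_nf
  have hI2 : 0 ≤ ∫ t in (0:ℝ)..T, |G t| ^ 2 :=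
    intervalIntegral.integral_nonneg hT fun u _ => sq_nonneg _
  have hEK := (Real.exp_pos K).le
  calc (∫ s in (0:ℝ)..T, |h s| ^ 2) ≤ T * (Real.exp K * J) ^ 2 := by
        rw [← step2]; exact step1
    _ = T * Real.exp (2 * K) * J ^ 2 := by rw [← hexp2]; ring
    _ ≤ T * Real.exp (2 * K) * (T * ∫ t in (0:ℝ)..T, |G t| ^ 2) := by
        apply mul_le_mul_of_nonneg_left hcs
          (mul_nonneg hT (Real.exp_pos _).le)
    _ = Real.exp (2 * K) * T ^ 2 * ∫ t in (0:ℝ)..T, |G t| ^ 2 := by ring
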